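/- Let Γ ⊢ N : φ be derivable, where Γ consists of Π1 formulas and N is a normal proof term. Assume in addition that either N is an eliminator or φ is a Σ1 formula. Then N contains no occurrence of object abstraction λx; moreover, if N is an eliminator then φ is a Π1 formula. -/
import Mathlib


set_option autoImplicit false

/-- Formulas of first-order intuitionistic logic over `→` and `∀` only. -/
inductive Fml : Type
  | atom : ℕ → List ℕ → Fml
  | imp : Fml → Fml → Fml
  | all : ℕ → Fml → Fml
deriving DecidableEq

namespace Fml

def fv : Fml → List ℕ
  | atom _ args => args
  | imp φ ψ => fv φ ++ fv ψ
  | all x φ => (fv φ).filter (fun y => y != x)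

def rename (σ : ℕ → ℕ) : Fml → Fml
  | atom r args => atom r (args.map σ)
  | imp φ ψ => imp (rename σ φ) (rename σ ψ)
  | all x φ => all x (rename (Function.update σ x x) φ)

def substV (φ : Fml) (x y : ℕ) : Fml := rename (Function.update id x y) φ

/-- The target of a formula: the relation symbol at the end of it. -/
def target : Fml → ℕ
  | atom r _ => r
  | imp _ ψ => target ψ
  | all _ φ => target φ

end Fml

/-- Proof terms. -/
inductive Tm : Type
  | pvar : ℕ → Tm
  | plam : ℕ → Fml → Tm → Tm
  | app : Tm → Tm → Tm
  | olam : ℕ → Tm → Tm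
  | oapp : Tm → ℕ → Tm

abbrev Env := List (ℕ × Fml)

def fvEnv (Γ : Env) : List ℕ := Γ.flatMap fun d => d.2.fv

/-- The type-assignment (proof-assignment) rules. -/
inductive Tj : Env → Tm → Fml → Prop
  | ax {Γ : Env} {X φ} : (X, φ) ∈ Γ → Tj Γ (.pvar X) φ
  | impI {Γ X φ M ψ} : Tj ((X, φ) :: Γ) M ψ → Tj Γ (.plam X φ M) (.imp φ ψ)
  | impE {Γ M N φ ψ} : Tj Γ M (.imp φ ψ) → Tj Γ N φ → Tj Γ (.app M N) ψ
  | allI {Γ x M φ} : x ∉ fvEnv Γ → Tj Γ M φ → Tj Γ (.olam x M) (.all x φ)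
  | allE {Γ x M φ} (y : ℕ) : Tj Γ M (.all x φ) → Tj Γ (.oapp M y) (φ.substV x y)

/-- Quantifier-free formulas. -/
def QF : Fml → Prop
  | .atom _ _ => True
  | .imp φ ψ => QF φ ∧ QF ψ
  | .all _ _ => False

mutual
  /-- The Mints class Σₙ. -/
  inductive SigmaM : ℕ → Fml → Prop
    | qf {φ} : QF φ → SigmaM 0 φ
    | atom {n r args} : SigmaM (n + 1) (.atom r args)
    | ofPi {n φ} : PiM n φ → SigmaM (n + 1) φ
    | imp {n φ ψ} : PiM (n + 1) φ → SigmaM (n + 1) ψ → SigmaM (n + 1) (.imp φ ψ)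
  /-- The Mints class Πₙ. -/
  inductive PiM : ℕ → Fml → Prop
    | qf {φ} : QF φ → PiM 0 φ
    | atom {n r args} : PiM (n + 1) (.atom r args)
    | ofSigma {n φ} : SigmaM n φ → PiM (n + 1) φ
    | imp {n φ ψ} : SigmaM (n + 1) φ → PiM (n + 1) ψ → PiM (n + 1) (.imp φ ψ)
    | all {n x φ} : PiM (n + 1) φ → PiM (n + 1) (.all x φ)
end

/-- Normal proof terms: no subterm `(λX:φ.M)N` or `(λx.M)y`. -/
def NormalTm : Tm → Prop
  | .pvar _ => True
  | .plam _ _ M => NormalTm M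
  | .olam _ M => NormalTm M
  | .app M N => NormalTm M ∧ NormalTm N ∧ ∀ X φ B, M ≠ Tm.plam X φ B
  | .oapp M _ => NormalTm M ∧ ∀ x B, M ≠ Tm.olam x B

/-- Eliminator shape: `X M₁ … Mᵣ`, where `X` is a proof variable and each
`Mᵢ` is a proof term or an object variable (an *eliminator* is a normal term
of this shape; normality is a separate hypothesis below). -/
inductive IsElim : Tm → Prop
  | pvar (X : ℕ) : IsElim (.pvar X)
  | app {M} (N : Tm) : IsElim M → IsElim (.app M N)
  | oapp {M} (y : ℕ) : IsElim M → IsElim (.oapp M y)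

/-- The term contains no occurrence of object abstraction `λx`. -/
def NoOlam : Tm → Prop
  | .pvar _ => True
  | .plam _ _ M => NoOlam M
  | .olam _ _ => False
  | .app M N => NoOlam M ∧ NoOlam N
  | .oapp M _ => NoOlam M

theorem QF_rename : ∀ (φ : Fml) (σ : ℕ → ℕ), QF φ → QF (φ.rename σ)
  | .atom _ _, _, _ => trivial
  | .imp φ ψ, σ, h => ⟨QF_rename φ σ h.1, QF_rename ψ σ h.2⟩

mutual
theorem sigma_rename {n : ℕ} {φ : Fml} (h : SigmaM n φ) (σ : ℕ → ℕ) :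
    SigmaM n (φ.rename σ) :=
  match h with
  | .qf hq => .qf (QF_rename _ _ hq)
  | .atom => .atom
  | .ofPi h' => .ofPi (pi_rename h' σ)
  | .imp h1 h2 => .imp (pi_rename h1 σ) (sigma_rename h2 σ)
theorem pi_rename {n : ℕ} {φ : Fml} (h : PiM n φ) (σ : ℕ → ℕ) :
    PiM n (φ.rename σ) :=
  match h with
  | .qf hq => .qf (QF_rename _ _ hq)
  | .atom => .atom
  | .ofSigma h' => .ofSigma (sigma_rename h' σ)
  | .imp h1 h2 => .imp (sigma_rename h1 σ) (pi_rename h2 σ)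
  | .all h' => .all (pi_rename h' _)
end

theorem elim_of_normal {Γ : Env} {N : Tm} {φ : Fml} (h : Tj Γ N φ)
    (hn : NormalTm N)
    (hp : ∀ X ψ B, N ≠ .plam X ψ B) (ho : ∀ x B, N ≠ .olam x B) :
    IsElim N := by
  induction h with
  | ax _ => exact .pvar _
  | impI _ _ => exact absurd rfl (hp _ _ _)
  | impE h1 h2 ih1 ih2 =>
    refine .app _ (ih1 hn.1 hn.2.2 ?_)
    rintro x B rfl; cases h1
  | allI _ _ _ => exact absurd rfl (ho _ _)
  | allE y h1 ih1 =>
    refine .oapp _ (ih1 hn.1 ?_ hn.2)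
    rintro X ψ B rfl; cases h1

/-- Lemma 5.4 of the paper.  Let `Γ ⊢ N : φ` where `Γ`
consists of `Π₁` formulas and `N` is normal, and assume that `N` is an
eliminator or `φ` is a `Σ₁` formula.  Then `N` contains no object
abstraction; moreover if `N` is an eliminator then `φ` is a `Π₁` formula. -/
theorem normal_pi1_no_object_abstraction (Γ : Env) (N : Tm) (φ : Fml)
    (h : Tj Γ N φ) (hn : NormalTm N)
    (hΓ : ∀ d ∈ Γ, PiM 1 d.2)
    (hcase : IsElim N ∨ SigmaM 1 φ) :
    NoOlam N ∧ (IsElim N → PiM 1 φ) := by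
  induction h with
  | @ax Γ X ψ hmem => exact ⟨trivial, fun _ => hΓ _ hmem⟩
  | @impI Γ X ψ M χ h1 ih =>
    have hσ : SigmaM 1 (Fml.imp ψ χ) := by
      rcases hcase with he | hσ
      · cases he
      · exact hσ
    have hpair : PiM 1 ψ ∧ SigmaM 1 χ := by
      cases hσ with
      | ofPi h' =>
        cases h' with
        | qf hq => exact ⟨.ofSigma (.qf hq.1), .ofPi (.qf hq.2)⟩
      | imp h1 h2 => exact ⟨h1, h2⟩
    have := ih hn (fun d hd => by
      rcases List.mem_cons.mp hd with rfl | hd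
      · exact hpair.1
      · exact hΓ _ hd) (Or.inr hpair.2)
    exact ⟨this.1, fun he => nomatch he⟩
  | @impE Γ M M' ψ χ h1 h2 ih1 ih2 =>
    have hM : IsElim M := by
      rcases hcase with he | hσ
      · cases he with | app _ he => exact he
      · refine elim_of_normal h1 hn.1 hn.2.2 ?_
        rintro x B rfl; cases h1
    have h1' := ih1 hn.1 hΓ (Or.inl hM)
    have hPi : PiM 1 (Fml.imp ψ χ) := h1'.2 hM
    have hpair : SigmaM 1 ψ ∧ PiM 1 χ := by
      cases hPi with
      | ofSigma h' =>
        cases h' with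
        | qf hq => exact ⟨.ofPi (.qf hq.1), .ofSigma (.qf hq.2)⟩
      | imp ha hb => exact ⟨ha, hb⟩
    have h2' := ih2 hn.2.1 hΓ (Or.inr hpair.1)
    exact ⟨⟨h1'.1, h2'.1⟩, fun _ => hpair.2⟩
  | @allI Γ x M ψ hx h1 ih =>
    rcases hcase with he | hσ
    · cases he
    · cases hσ with
      | ofPi h' => cases h' with | qf hq => exact hq.elim
  | @allE Γ x M ψ y h1 ih =>
    have hM : IsElim M := by
      rcases hcase with he | hσ
      · cases he with | oapp _ he => exact he
      · refine elim_of_normal h1 hn.1 ?_ hn.2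
        rintro X χ B rfl; cases h1
    have h1' := ih hn.1 hΓ (Or.inl hM)
    have hPi : PiM 1 (Fml.all x ψ) := h1'.2 hM
    have hψ : PiM 1 ψ := by
      cases hPi with
      | ofSigma h' => cases h' with | qf hq => exact hq.elim
      | all h' => exact h'
    exact ⟨h1'.1, fun _ => pi_rename hψ _⟩
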